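/- Let s,ℓ,c be positive integers with c+ℓ=s and n=3s-ℓ=2ℓ+3c. Let F ⊆ 2^[n] be a shifted family with ν(F) < s. Suppose d(F) ≥ d where d ∈ [2, c+1] is an even integer. Let X ⊆ [2ℓ+d−1] be a set such that for every x ∈ X the family F ∩ (([2ℓ+d−1] \ {x}) choose 2) contains an (ℓ+(d−2)/2)-matching. If ν(F ∩ ([2ℓ+d, n] choose 3)) ≥ c−d+1, then y_F(3) ≥ |X|·C(2d−2, 2)·(1 − (2ℓ+d−2)(d−2)/((d−2)|X|+2ℓ)). -/

import Mathlib

open Finset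

/-- The ground set `[n] = {1, 2, …, n}`. -/
def ground (n : ℕ) : Finset ℕ := Finset.Icc 1 n

-- The matching number `ν(F)` of a family: the size of the largest pairwise
-- disjoint subfamily of `F`.
open Classical in
noncomputable def matchingNumber (F : Finset (Finset ℕ)) : ℕ :=
  (F.powerset.filter fun M : Finset (Finset ℕ) =>
      (M : Set (Finset ℕ)).Pairwise fun A B => Disjoint A B).sup Finset.card

-- `e(n, s)`: the maximum size of a family `F ⊆ 2^[n]` with `ν(F) < s`.
open Classical in
noncomputable def extremalNumber (n s : ℕ) : ℕ :=
  (((ground n).powerset.powerset).filter fun F => matchingNumber F < s).sup Finset.card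

/-- The family `P(s, ℓ) = {P ⊆ [n] : |P| + |P ∩ [ℓ-1]| ≥ 3}` (it depends only on `n, ℓ`). -/
def famP (n l : ℕ) : Finset (Finset ℕ) :=
  (ground n).powerset.filter fun A => 3 ≤ A.card + (A ∩ Finset.Icc 1 (l - 1)).card

/-- The family `P'(s, ℓ)`: all subsets of `[n]` of size at least `3` together with
all `2`-element subsets of `[2ℓ-1]`. -/
def famP' (n l : ℕ) : Finset (Finset ℕ) :=
  ((ground n).powerset.filter fun A => 3 ≤ A.card) ∪
    (Finset.Icc 1 (2 * l - 1)).powersetCard 2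

/-- The family `Q(s, ℓ)`: all subsets of `[n]` of size at least `3` together with all
`2`-element subsets of `[s+ℓ-1]`, with all `3`-element subsets of `[s+ℓ, n]` removed. -/
def famQ (n s l : ℕ) : Finset (Finset ℕ) :=
  (((ground n).powerset.filter fun A => 3 ≤ A.card) ∪
      (Finset.Icc 1 (s + l - 1)).powersetCard 2) \
    (Finset.Icc (s + l) n).powersetCard 3

/-- The family `W(s, ℓ) = {P ⊆ [n] : |P ∩ [2s-1]| ≥ 2}`. -/
def famW (n s : ℕ) : Finset (Finset ℕ) :=
  (ground n).powerset.filter fun A => 2 ≤ (A ∩ Finset.Icc 1 (2 * s - 1)).card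

/-- The `(i ← j)`-shift of a set. -/
def shiftSet (i j : ℕ) (A : Finset ℕ) : Finset ℕ :=
  if j ∈ A ∧ i ∉ A then insert i (A.erase j) else A

/-- The `(i ← j)`-shift of a family. -/
def shiftFam (i j : ℕ) (F : Finset (Finset ℕ)) : Finset (Finset ℕ) :=
  F.image (shiftSet i j) ∪ F.filter fun A => shiftSet i j A ∈ F

/-- A family `F ⊆ 2^[n]` is shifted if it is invariant under all `(i ← j)`-shifts
with `1 ≤ i < j ≤ n`. -/
def IsShifted (n : ℕ) (F : Finset (Finset ℕ)) : Prop :=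
  ∀ i j : ℕ, 1 ≤ i → i < j → j ≤ n → shiftFam i j F = F

/-- `A` can be shifted to `B`: some sequence of `(a ← b)`-shifts with `a < b`
transforms `A` into `B`. -/
def ShiftsTo (n : ℕ) (A B : Finset ℕ) : Prop :=
  Relation.ReflTransGen
    (fun X Y => ∃ a b : ℕ, 1 ≤ a ∧ a < b ∧ b ≤ n ∧ Y = shiftSet a b X) A B

/-- A family `F ⊆ 2^[n]` is an up-set if it is closed under supersets inside `[n]`. -/
def IsUpSet (n : ℕ) (F : Finset (Finset ℕ)) : Prop :=
  ∀ A ∈ F, ∀ B : Finset ℕ, A ⊆ B → B ⊆ ground n → B ∈ F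

/-- The `k`-th layer of a family: its `k`-element members (as subsets of `[n]`). -/
def layer (n : ℕ) (F : Finset (Finset ℕ)) (k : ℕ) : Finset (Finset ℕ) :=
  F ∩ (ground n).powersetCard k

/-- `y_F(k)`: the number of `k`-element subsets of `[n]` that do not belong to `F`. -/
def yF (n : ℕ) (F : Finset (Finset ℕ)) (k : ℕ) : ℕ :=
  Nat.choose n k - (layer n F k).card

/-- The defining condition for `d(F)` (with parameter `ℓ`). -/
def DCond (l : ℕ) (F : Finset (Finset ℕ)) (d : ℕ) : Prop :=
  (Even d ∧ ∃ i ∈ Finset.Icc 1 (l + d / 2), ({i, 2 * l + d + 1 - i} : Finset ℕ) ∉ F) ∨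
  (Odd d ∧ (({1, 2 * l + d} : Finset ℕ) ∉ F ∨
    ∃ i ∈ Finset.Icc 3 (l + (d + 1) / 2), ({i, 2 * l + d + 2 - i} : Finset ℕ) ∉ F))

/-- `d(F)`: the smallest `d ≥ 0` satisfying the condition `DCond ℓ F d`. -/
noncomputable def dF (l : ℕ) (F : Finset (Finset ℕ)) : ℕ := sInf {d : ℕ | DCond l F d}

section Helpers

/-- Lower bound for matchingNumber by exhibiting a matching. -/
lemma le_matchingNumber {G M : Finset (Finset ℕ)} (h1 : M ⊆ G)
    (h2 : (M : Set (Finset ℕ)).Pairwise fun A B => Disjoint A B) :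
    M.card ≤ matchingNumber G := by
  classical
  unfold matchingNumber
  apply Finset.le_sup
  rw [Finset.mem_filter, Finset.mem_powerset]
  exact ⟨h1, h2⟩

/-- Extract a matching of exactly `k` sets. -/
lemma exists_matching {G : Finset (Finset ℕ)} {k : ℕ} (hk : 0 < k)
    (h : k ≤ matchingNumber G) :
    ∃ M, M ⊆ G ∧ (M : Set (Finset ℕ)).Pairwise (fun A B => Disjoint A B) ∧ M.card = k := by
  classical
  unfold matchingNumber at h
  rw [Finset.le_sup_iff (by simpa using hk)] at h
  obtain ⟨M0, hM0, hk0⟩ := h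
  rw [Finset.mem_filter, Finset.mem_powerset] at hM0
  obtain ⟨M, hMs, hMc⟩ := Finset.exists_subset_card_eq hk0
  exact ⟨M, hMs.trans hM0.1, hM0.2.mono (Finset.coe_subset.mpr hMs), hMc⟩

lemma card_biUnion_of_pairwise {M : Finset (Finset ℕ)} {k : ℕ}
    (hp : (M : Set (Finset ℕ)).Pairwise fun A B => Disjoint A B)
    (hc : ∀ A ∈ M, A.card = k) :
    (M.biUnion id).card = k * M.card := by
  classical
  have h1 : ∀ x ∈ M, ∀ y ∈ M, x ≠ y → Disjoint (id x) (id y) :=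
    fun A hA B hB hne => hp (Finset.mem_coe.mpr hA) (Finset.mem_coe.mpr hB) hne
  have h2 : ∑ u ∈ M, (id u).card = ∑ _u ∈ M, k :=
    Finset.sum_congr rfl (fun A hA => by simp [hc A hA])
  rw [Finset.card_biUnion h1, h2, Finset.sum_const, smul_eq_mul, Nat.mul_comm]

lemma pairwiseDisjoint_union {M N : Finset (Finset ℕ)}
    (hM : (M : Set (Finset ℕ)).Pairwise fun A B => Disjoint A B)
    (hN : (N : Set (Finset ℕ)).Pairwise fun A B => Disjoint A B)
    (hcross : ∀ A ∈ M, ∀ B ∈ N, Disjoint A B) :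
    (((M ∪ N) : Finset (Finset ℕ)) : Set (Finset ℕ)).Pairwise fun A B => Disjoint A B := by
  intro A hA B hB hne
  simp only [Finset.coe_union, Set.mem_union, Finset.mem_coe] at hA hB
  rcases hA with hA | hA <;> rcases hB with hB | hB
  · exact hM hA hB hne
  · exact hcross A hA B hB
  · exact (hcross B hB A hA).symm
  · exact hN hA hB hne

/-- The central contradiction: a good system yields an `s`-matching in `F`. -/
lemma claimA
    {F : Finset (Finset ℕ)} {s l c d n : ℕ}
    (hcl : c + l = s) (hn : n = 2*l + 3*c) (hd2 : 2 ≤ d) (hdc : d ≤ c + 1)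
    (hnu : matchingNumber F < s)
    {x : ℕ} (hx : x ∈ Finset.Icc 1 (2*l+d-1))
    {Mx : Finset (Finset ℕ)} (hMxF : Mx ⊆ F)
    (hMxp : (Mx : Set (Finset ℕ)).Pairwise fun A B => Disjoint A B)
    (hMxmem : ∀ A ∈ Mx, A.card = 2 ∧ A ⊆ (Finset.Icc 1 (2*l+d-1)).erase x)
    (hMxcard : Mx.card = l + (d-2)/2)
    {Mt : Finset (Finset ℕ)} (hMtF : Mt ⊆ F)
    (hMtp : (Mt : Set (Finset ℕ)).Pairwise fun A B => Disjoint A B)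
    (hMtmem : ∀ A ∈ Mt, A.card = 3 ∧ A ⊆ Finset.Icc (2*l+d) n)
    (hMtcard : Mt.card = c + 1 - d)
    {Q : Finset ℕ} (hQ : Q ⊆ (Finset.Icc (2*l+d) n) \ (Mt.biUnion id)) (hQcard : Q.card = 2)
    (hQF : insert x Q ∈ F)
    {R : Finset (Finset ℕ)} (hR : R ⊆ Mx) (hRcard : R.card = (d-2)/2)
    {P : Finset (Finset ℕ)}
    (hPmem : ∀ p ∈ P, p.card = 2 ∧ p ⊆ ((Finset.Icc (2*l+d) n) \ (Mt.biUnion id)) \ Q)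
    (hPp : (P : Set (Finset ℕ)).Pairwise fun A B => Disjoint A B)
    (hPcard : P.card = d - 2)
    {σ : Finset ℕ → ℕ} (hσinj : Set.InjOn σ (P : Set (Finset ℕ)))
    (hσmem : ∀ p ∈ P, σ p ∈ R.biUnion id)
    (hσF : ∀ p ∈ P, insert (σ p) p ∈ F) :
    False := by
  classical
  -- low/high facts
  have hlow1 : ∀ A ∈ Mx, ∀ a ∈ A, a < 2*l+d ∧ a ≠ x := by
    intro A hA a ha
    have := (hMxmem A hA).2 ha
    rw [Finset.mem_erase, Finset.mem_Icc] at this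
    exact ⟨by omega, this.1⟩
  have hhighT : ∀ a ∈ ((Finset.Icc (2*l+d) n) \ (Mt.biUnion id)), 2*l+d ≤ a := by
    intro a ha
    have := Finset.mem_sdiff.mp ha
    rw [Finset.mem_Icc] at this
    omega
  have hhighMt : ∀ A ∈ Mt, ∀ a ∈ A, 2*l+d ≤ a := by
    intro A hA a ha
    have := (hMtmem A hA).2 ha
    rw [Finset.mem_Icc] at this
    omega
  have hxlow : x < 2*l+d ∧ 1 ≤ x := by
    rw [Finset.mem_Icc] at hx; omega
  -- σ p facts : low, ≠ x, and lies in some member of R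
  have hσR : ∀ p ∈ P, ∃ C ∈ R, σ p ∈ C := by
    intro p hp
    have := hσmem p hp
    rw [Finset.mem_biUnion] at this
    obtain ⟨C, hC, hmem⟩ := this
    exact ⟨C, hC, hmem⟩
  have hσlow : ∀ p ∈ P, σ p < 2*l+d ∧ σ p ≠ x := by
    intro p hp
    obtain ⟨C, hC, hmem⟩ := hσR p hp
    exact hlow1 C (hR hC) _ hmem
  have hQhigh : ∀ a ∈ Q, 2*l+d ≤ a := fun a ha => hhighT a (hQ ha)
  have hPhigh : ∀ p ∈ P, ∀ a ∈ p, 2*l+d ≤ a := by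
    intro p hp a ha
    exact hhighT a (Finset.sdiff_subset ((hPmem p hp).2 ha))
  have hPT : ∀ p ∈ P, ∀ a ∈ p, a ∉ Mt.biUnion id ∧ a ∉ Q := by
    intro p hp a ha
    have h2 := (hPmem p hp).2 ha
    rw [Finset.mem_sdiff, Finset.mem_sdiff] at h2
    exact ⟨h2.1.2, h2.2⟩
  have hQT : ∀ a ∈ Q, a ∉ Mt.biUnion id := by
    intro a ha
    have := Finset.mem_sdiff.mp (hQ ha)
    exact this.2
  -- the four pieces
  set S1 : Finset (Finset ℕ) := Mx \ R with hS1
  set S3 : Finset (Finset ℕ) := P.image (fun p => insert (σ p) p) with hS3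
  set S4 : Finset (Finset ℕ) := {insert x Q} with hS4
  -- member descriptions
  have hS3mem : ∀ B ∈ S3, ∃ p ∈ P, B = insert (σ p) p := by
    intro B hB
    rw [hS3, Finset.mem_image] at hB
    obtain ⟨p, hp, rfl⟩ := hB
    exact ⟨p, hp, rfl⟩
  -- disjointness facts
  have hdisj_S1_Mt : ∀ A ∈ S1, ∀ B ∈ Mt, Disjoint A B := by
    intro A hA B hB
    rw [Finset.disjoint_left]
    intro a haA haB
    have h1 := (hlow1 A (Finset.mem_sdiff.mp hA).1 a haA).1
    have h2 := hhighMt B hB a haB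
    omega
  have hdisj_S1_S3 : ∀ A ∈ S1, ∀ B ∈ S3, Disjoint A B := by
    intro A hA B hB
    obtain ⟨p, hp, rfl⟩ := hS3mem B hB
    rw [Finset.disjoint_left]
    intro a haA haB
    rw [Finset.mem_insert] at haB
    rcases haB with rfl | haB
    · -- a = σ p ∈ some C ∈ R, C ≠ A since A ∉ R, contradiction with pairwise disjoint
      obtain ⟨C, hC, hmem⟩ := hσR p hp
      have hAMx := (Finset.mem_sdiff.mp hA).1
      have hAnR := (Finset.mem_sdiff.mp hA).2
      have hne : A ≠ C := fun h => hAnR (h ▸ hC)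
      have := hMxp (Finset.mem_coe.mpr hAMx) (Finset.mem_coe.mpr (hR hC)) hne
      exact (Finset.disjoint_left.mp this haA) hmem
    · have h1 := (hlow1 A (Finset.mem_sdiff.mp hA).1 a haA).1
      have h2 := hPhigh p hp a haB
      omega
  have hdisj_S1_S4 : ∀ A ∈ S1, ∀ B ∈ S4, Disjoint A B := by
    intro A hA B hB
    rw [hS4, Finset.mem_singleton] at hB
    subst hB
    rw [Finset.disjoint_left]
    intro a haA haB
    rw [Finset.mem_insert] at haB
    have h1 := hlow1 A (Finset.mem_sdiff.mp hA).1 a haA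
    rcases haB with rfl | haB
    · exact h1.2 rfl
    · have := hQhigh a haB; omega
  have hdisj_Mt_S3 : ∀ A ∈ Mt, ∀ B ∈ S3, Disjoint A B := by
    intro A hA B hB
    obtain ⟨p, hp, rfl⟩ := hS3mem B hB
    rw [Finset.disjoint_left]
    intro a haA haB
    rw [Finset.mem_insert] at haB
    rcases haB with rfl | haB
    · have h1 := (hσlow p hp).1
      have h2 := hhighMt A hA _ haA
      omega
    · refine (hPT p hp a haB).1 ?_
      rw [Finset.mem_biUnion]
      exact ⟨A, hA, haA⟩
  have hdisj_Mt_S4 : ∀ A ∈ Mt, ∀ B ∈ S4, Disjoint A B := by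
    intro A hA B hB
    rw [hS4, Finset.mem_singleton] at hB
    subst hB
    rw [Finset.disjoint_left]
    intro a haA haB
    rw [Finset.mem_insert] at haB
    rcases haB with rfl | haB
    · have := hhighMt A hA _ haA; omega
    · refine hQT a haB ?_
      rw [Finset.mem_biUnion]
      exact ⟨A, hA, haA⟩
  have hdisj_S3_S4 : ∀ A ∈ S3, ∀ B ∈ S4, Disjoint A B := by
    intro A hA B hB
    obtain ⟨p, hp, rfl⟩ := hS3mem A hA
    rw [hS4, Finset.mem_singleton] at hB
    subst hB
    rw [Finset.disjoint_left]
    intro a haA haB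
    rw [Finset.mem_insert] at haA
    rw [Finset.mem_insert] at haB
    rcases haA with rfl | haA
    · rcases haB with h | h
      · exact (hσlow p hp).2 h
      · have := hQhigh _ h
        have := (hσlow p hp).1
        omega
    · rcases haB with rfl | h
      · have := hPhigh p hp _ haA
        omega
      · exact (hPT p hp a haA).2 h
  have hdisj_S3_S3 : (S3 : Set (Finset ℕ)).Pairwise fun A B => Disjoint A B := by
    intro A hA B hB hne
    obtain ⟨p, hp, rfl⟩ := hS3mem A (Finset.mem_coe.mp hA)
    obtain ⟨p', hp', rfl⟩ := hS3mem B (Finset.mem_coe.mp hB)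
    have hppne : p ≠ p' := by
      rintro rfl; exact hne rfl
    rw [Finset.disjoint_left]
    intro a haA haB
    rw [Finset.mem_insert] at haA haB
    rcases haA with rfl | haA
    · rcases haB with h | h
      · exact hppne (hσinj (Finset.mem_coe.mpr hp) (Finset.mem_coe.mpr hp') h)
      · have h1 := (hσlow p hp).1
        have h2 := hPhigh p' hp' _ h
        omega
    · rcases haB with rfl | h
      · have h1 := (hσlow p' hp').1
        have h2 := hPhigh p hp _ haA
        omega
      · exact Finset.disjoint_left.mp
          (hPp (Finset.mem_coe.mpr hp) (Finset.mem_coe.mpr hp') hppne) haA h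
  -- assemble the matching
  set MM : Finset (Finset ℕ) := ((S1 ∪ Mt) ∪ (S3 ∪ S4)) with hMM
  have hMMF : MM ⊆ F := by
    intro A hA
    rw [hMM] at hA
    simp only [Finset.mem_union] at hA
    rcases hA with (hA | hA) | (hA | hA)
    · exact hMxF (Finset.mem_sdiff.mp hA).1
    · exact hMtF hA
    · obtain ⟨p, hp, rfl⟩ := hS3mem A hA
      exact hσF p hp
    · rw [hS4, Finset.mem_singleton] at hA
      subst hA; exact hQF
  have hMMp : (MM : Set (Finset ℕ)).Pairwise fun A B => Disjoint A B := by
    rw [hMM]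
    apply pairwiseDisjoint_union
    · apply pairwiseDisjoint_union
      · exact hMxp.mono (Finset.coe_subset.mpr Finset.sdiff_subset)
      · exact hMtp
      · exact hdisj_S1_Mt
    · apply pairwiseDisjoint_union
      · exact hdisj_S3_S3
      · rw [hS4, Finset.coe_singleton]; exact Set.pairwise_singleton _ _
      · exact hdisj_S3_S4
    · intro A hA B hB
      rw [Finset.mem_union] at hA hB
      rcases hA with hA | hA <;> rcases hB with hB | hB
      · exact hdisj_S1_S3 A hA B hB
      · exact hdisj_S1_S4 A hA B hB
      · exact hdisj_Mt_S3 A hA B hB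
      · exact hdisj_Mt_S4 A hA B hB
  -- cardinalities
  have hS1card : S1.card = l := by
    rw [hS1, Finset.card_sdiff_of_subset hR, hMxcard, hRcard]
    omega
  have hS3card : S3.card = d - 2 := by
    rw [hS3, Finset.card_image_of_injOn, hPcard]
    intro p hp p' hp' heq
    by_contra hne
    have hdisj : Disjoint (insert (σ p) p) (insert (σ p') p') := by
      have hA : insert (σ p) p ∈ S3 := by
        rw [hS3, Finset.mem_image]; exact ⟨p, Finset.mem_coe.mp hp, rfl⟩
      have hB : insert (σ p') p' ∈ S3 := by
        rw [hS3, Finset.mem_image]; exact ⟨p', Finset.mem_coe.mp hp', rfl⟩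
      -- directly redo the argument
      rw [Finset.disjoint_left]
      intro a haA haB
      rw [Finset.mem_insert] at haA haB
      rcases haA with rfl | haA
      · rcases haB with h | h
        · exact hne (hσinj hp hp' h)
        · have h1 := (hσlow p (Finset.mem_coe.mp hp)).1
          have h2 := hPhigh p' (Finset.mem_coe.mp hp') _ h
          omega
      · rcases haB with rfl | h
        · have h1 := (hσlow p' (Finset.mem_coe.mp hp')).1
          have h2 := hPhigh p (Finset.mem_coe.mp hp) _ haA
          omega
        · exact Finset.disjoint_left.mp (hPp hp hp' hne) haA h
    have heq' : insert (σ p) p = insert (σ p') p' := heq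
    rw [heq'] at hdisj
    have hbot := disjoint_self.mp hdisj
    have hmem : σ p' ∈ insert (σ p') p' := Finset.mem_insert_self _ _
    rw [hbot] at hmem
    simp at hmem
  -- the pieces are pairwise different families
  have hMMcard : MM.card = s := by
    have hxQ3 : ∀ B ∈ S4, x ∈ B ∧ x < 2*l+d := by
      intro B hB
      rw [hS4, Finset.mem_singleton] at hB
      subst hB
      exact ⟨Finset.mem_insert_self _ _, hxlow.1⟩
    have hd12 : Disjoint S1 Mt := by
      rw [Finset.disjoint_left]
      intro A hA hA'
      have h2 := (hMxmem A (Finset.mem_sdiff.mp hA).1).1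
      have h3 := (hMtmem A hA').1
      omega
    have hd34 : Disjoint S3 S4 := by
      rw [Finset.disjoint_left]
      intro A hA hA'
      obtain ⟨p, hp, rfl⟩ := hS3mem A hA
      rw [hS4, Finset.mem_singleton] at hA'
      -- x ∈ insert x Q but x ∉ insert (σ p) p
      have hxmem : x ∈ insert (σ p) p := by
        rw [hA']; exact Finset.mem_insert_self _ _
      rw [Finset.mem_insert] at hxmem
      rcases hxmem with h | h
      · exact (hσlow p hp).2 h.symm
      · have := hPhigh p hp _ h; omega
    have hdLR : Disjoint (S1 ∪ Mt) (S3 ∪ S4) := by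
      rw [Finset.disjoint_left]
      intro A hA hA'
      rw [Finset.mem_union] at hA hA'
      -- members of S3 and S4 contain both a low and a high element
      have hmix : (∃ a ∈ A, a < 2*l+d) ∧ (∃ a ∈ A, 2*l+d ≤ a) := by
        rcases hA' with hA' | hA'
        · obtain ⟨p, hp, rfl⟩ := hS3mem A hA'
          obtain ⟨b, hb⟩ := Finset.card_pos.mp (by rw [(hPmem p hp).1]; omega)
          exact ⟨⟨σ p, Finset.mem_insert_self _ _, (hσlow p hp).1⟩,
            ⟨b, Finset.mem_insert_of_mem hb, hPhigh p hp b hb⟩⟩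
        · rw [hS4, Finset.mem_singleton] at hA'
          subst hA'
          obtain ⟨b, hb⟩ := Finset.card_pos.mp (by rw [hQcard]; omega)
          exact ⟨⟨x, Finset.mem_insert_self _ _, hxlow.1⟩,
            ⟨b, Finset.mem_insert_of_mem hb, hQhigh b hb⟩⟩
      rcases hA with hA | hA
      · obtain ⟨a, ha, ha2⟩ := hmix.2
        have := (hlow1 A (Finset.mem_sdiff.mp hA).1 a ha).1
        omega
      · obtain ⟨a, ha, ha2⟩ := hmix.1
        have := hhighMt A hA a ha
        omega
    rw [hMM, Finset.card_union_of_disjoint hdLR, Finset.card_union_of_disjoint hd12,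
      Finset.card_union_of_disjoint hd34, hS1card, hMtcard, hS3card, hS4]
    simp only [Finset.card_singleton]
    omega
  have := le_matchingNumber hMMF hMMp
  rw [hMMcard] at this
  omega

end Helpers

section Helpers2

/-- Hall-type step: few bad pairs means a full good assignment exists. -/
lemma hall_step {F : Finset (Finset ℕ)} {W : Finset ℕ} {Pf : Finset (Finset ℕ)} {m : ℕ}
    (hW : W.card = m) (hPf : Pf.card = m)
    (hbad : ((W ×ˢ Pf).filter fun y => insert y.1 y.2 ∉ F).card < m) :
    ∃ σ : Finset ℕ → ℕ, Set.InjOn σ (Pf : Set (Finset ℕ)) ∧ (∀ p ∈ Pf, σ p ∈ W) ∧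
      ∀ p ∈ Pf, insert (σ p) p ∈ F := by
  classical
  have hm : 1 ≤ m := lt_of_le_of_lt (Nat.zero_le _) hbad
  set Bad := ((W ×ˢ Pf).filter fun y => insert y.1 y.2 ∉ F) with hBad
  set t : {p // p ∈ Pf} → Finset ℕ := fun p => W.filter (fun w => insert w p.val ∈ F) with ht
  have hall : ∀ S : Finset {p // p ∈ Pf}, S.card ≤ (S.biUnion t).card := by
    intro S
    rcases Finset.eq_empty_or_nonempty S with rfl | hSne
    · simp
    have hk1 : 1 ≤ S.card := Finset.card_pos.mpr hSne
    have hkm : S.card ≤ m := by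
      have h1 := Finset.card_le_univ S
      rwa [Fintype.card_coe, hPf] at h1
    set miss := W.filter (fun w => ∀ p ∈ S, insert w (p : Finset ℕ) ∉ F) with hmiss
    have hsub1 : W \ miss ⊆ S.biUnion t := by
      intro w hw
      rw [Finset.mem_sdiff, hmiss, Finset.mem_filter] at hw
      have : ∃ p ∈ S, insert w (p : Finset ℕ) ∈ F := by
        by_contra hcon
        push_neg at hcon
        exact hw.2 ⟨hw.1, hcon⟩
      obtain ⟨p, hpS, hpF⟩ := this
      rw [Finset.mem_biUnion]
      exact ⟨p, hpS, by rw [ht]; exact Finset.mem_filter.mpr ⟨hw.1, hpF⟩⟩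
    have hsub2 : miss ×ˢ (S.image Subtype.val) ⊆ Bad := by
      rintro ⟨w, pv⟩ hy
      rw [Finset.mem_product] at hy
      obtain ⟨hw, hpv⟩ := hy
      rw [Finset.mem_image] at hpv
      obtain ⟨p, hpS, rfl⟩ := hpv
      rw [hmiss, Finset.mem_filter] at hw
      rw [hBad, Finset.mem_filter, Finset.mem_product]
      exact ⟨⟨hw.1, p.2⟩, hw.2 p hpS⟩
    have hprod : miss.card * S.card ≤ m - 1 := by
      have h1 := Finset.card_le_card hsub2
      rw [Finset.card_product, Finset.card_image_of_injOn
        (Set.injOn_of_injective Subtype.val_injective)] at h1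
      omega
    have hms : miss ⊆ W := Finset.filter_subset _ _
    have hcd : (W \ miss).card = m - miss.card := by
      rw [Finset.card_sdiff_of_subset hms, hW]
    have harith : S.card + miss.card ≤ m := by
      rcases Nat.eq_zero_or_pos miss.card with h0 | h1
      · omega
      · have h3 : S.card + miss.card ≤ miss.card * S.card + 1 := by
          zify
          nlinarith [mul_nonneg (by push_cast; linarith : (0:ℤ) ≤ (miss.card : ℤ) - 1)
            (by push_cast; linarith : (0:ℤ) ≤ (S.card : ℤ) - 1)]
        omega
    calc S.card ≤ m - miss.card := by omega
    _ = (W \ miss).card := hcd.symm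
    _ ≤ (S.biUnion t).card := Finset.card_le_card hsub1
  obtain ⟨f, hfinj, hft⟩ := (Finset.all_card_le_biUnion_card_iff_existsInjective' t).mp hall
  refine ⟨fun q => if h : q ∈ Pf then f ⟨q, h⟩ else 0, ?_, ?_, ?_⟩
  · intro p hp p' hp' heq
    rw [Finset.mem_coe] at hp hp'
    simp only [dif_pos hp, dif_pos hp'] at heq
    have := hfinj heq
    exact congrArg Subtype.val this
  · intro p hp
    simp only [dif_pos hp]
    have := hft ⟨p, hp⟩
    rw [ht] at this
    exact (Finset.mem_filter.mp this).1
  · intro p hp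
    simp only [dif_pos hp]
    have := hft ⟨p, hp⟩
    rw [ht] at this
    exact (Finset.mem_filter.mp this).2

/-- A collection of `2m+1` pairwise edge-disjoint perfect matchings on a `(2m+2)`-set. -/
lemma exists_factorization {Tq : Finset ℕ} {m : ℕ} (hm : 1 ≤ m) (hT : Tq.card = 2*m + 2) :
    ∃ fac : ℕ → Finset (Finset ℕ),
      (∀ i, (∀ p ∈ fac i, p.card = 2 ∧ p ⊆ Tq) ∧
        ((fac i : Set (Finset ℕ)).Pairwise fun A B => Disjoint A B) ∧ (fac i).card = m + 1) ∧
      (∀ p : Finset ℕ, ∀ i < 2*m+1, ∀ j < 2*m+1, p ∈ fac i → p ∈ fac j → i = j) := by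
  classical
  set q := 2*m+1 with hq
  haveI : NeZero q := ⟨by omega⟩
  set v : Fin (2*m+2) → ℕ := fun i => ((Tq.orderIsoOfFin hT) i : ℕ) with hv
  have hvinj : Function.Injective v := by
    intro i j h
    exact (Tq.orderIsoOfFin hT).injective (Subtype.ext h)
  have hvmem : ∀ i, v i ∈ Tq := fun i => ((Tq.orderIsoOfFin hT) i).2
  set g : ZMod q → ℕ := fun a => v ⟨a.val, by have := ZMod.val_lt a; omega⟩ with hg
  set winf : ℕ := v ⟨2*m+1, by omega⟩ with hwinf
  have hginj : Function.Injective g := by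
    intro a b h
    have h1 : (⟨a.val, by have := ZMod.val_lt a; omega⟩ : Fin (2*m+2)) =
        ⟨b.val, by have := ZMod.val_lt b; omega⟩ := hvinj h
    have h2 : a.val = b.val := by simpa using congrArg Fin.val h1
    have ha := ZMod.natCast_rightInverse (n := q) a
    have hb := ZMod.natCast_rightInverse (n := q) b
    rw [← ha, ← hb, h2]
  have hwg : ∀ a, winf ≠ g a := by
    intro a h
    have h1 : (⟨2*m+1, by omega⟩ : Fin (2*m+2)) =
        ⟨a.val, by have := ZMod.val_lt a; omega⟩ := hvinj h
    have h2 : 2*m+1 = a.val := by simpa using congrArg Fin.val h1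
    have := ZMod.val_lt a
    omega
  have hcasteq : ∀ a b : ℕ, a < q → b < q → (a : ZMod q) = (b : ZMod q) → a = b := by
    intro a b ha hb h
    have := congrArg ZMod.val h
    rwa [ZMod.val_cast_of_lt ha, ZMod.val_cast_of_lt hb] at this
  have hne0 : ∀ k : ℕ, 0 < k → k < q → ((k : ZMod q)) ≠ 0 := by
    intro k h1 h2 h
    rw [ZMod.natCast_eq_zero_iff] at h
    have := Nat.le_of_dvd h1 h
    omega
  -- key cancellation facts
  have haddinj : ∀ (i : ZMod q) (a b : ℕ), a < q → b < q → i + a = i + b → a = b := by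
    intro i a b ha hb h
    exact hcasteq a b ha hb (add_left_cancel h)
  have hsubinj : ∀ (i : ZMod q) (a b : ℕ), a < q → b < q → i - a = i - b → a = b := by
    intro i a b ha hb h
    have : (a : ZMod q) = b := by
      have h2 := congrArg (fun z => i - z) h
      simpa using (sub_right_injective h)
    exact hcasteq a b ha hb this
  have hmix : ∀ (i : ZMod q) (a b : ℕ), 0 < a + b → a + b < q → i + a ≠ i - b := by
    intro i a b h1 h2 h
    have h3 : (a : ZMod q) + (b : ZMod q) = 0 := by linear_combination h
    rw [← Nat.cast_add] at h3
    exact hne0 _ h1 h2 h3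
  -- two is invertible
  have htwo : ∀ i i' : ZMod q, i + i = i' + i' → i = i' := by
    intro i i' h
    have hr : ((m+1 : ℕ) : ZMod q) * 2 = 1 := by
      have h1 : (((m+1) * 2 : ℕ) : ZMod q) = ((q + 1 : ℕ) : ZMod q) := by
        congr 1
        omega
      have h2 : ((q + 1 : ℕ) : ZMod q) = 1 := by
        rw [Nat.cast_add, ZMod.natCast_self, Nat.cast_one, zero_add]
      calc ((m+1 : ℕ) : ZMod q) * 2 = (((m+1) * 2 : ℕ) : ZMod q) := by push_cast; ring
      _ = 1 := by rw [h1, h2]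
    have : (2 : ZMod q) * i = 2 * i' := by
      rw [two_mul, two_mul, h]
    calc i = 1 * i := (one_mul i).symm
    _ = (((m+1 : ℕ) : ZMod q) * 2) * i := by rw [hr]
    _ = ((m+1 : ℕ) : ZMod q) * (2 * i) := by ring
    _ = ((m+1 : ℕ) : ZMod q) * (2 * i') := by rw [this]
    _ = (((m+1 : ℕ) : ZMod q) * 2) * i' := by ring
    _ = 1 * i' := by rw [hr]
    _ = i' := one_mul i'
  set fac : ℕ → Finset (Finset ℕ) := fun i0 =>
    insert {winf, g (i0 : ZMod q)}
      ((Finset.range m).image fun j => {g ((i0 : ZMod q) + ((j+1 : ℕ) : ZMod q)),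
        g ((i0 : ZMod q) - ((j+1 : ℕ) : ZMod q))}) with hfac
  refine ⟨fac, ?_, ?_⟩
  · intro i0
    set i : ZMod q := (i0 : ZMod q)
    have hmemdesc : ∀ p ∈ fac i0, p = {winf, g i} ∨
        ∃ j < m, p = {g (i + ((j+1 : ℕ) : ZMod q)), g (i - ((j+1 : ℕ) : ZMod q))} := by
      intro p hp
      rw [hfac, Finset.mem_insert] at hp
      rcases hp with h | h
      · exact Or.inl h
      · rw [Finset.mem_image] at h
        obtain ⟨j, hj, rfl⟩ := h
        exact Or.inr ⟨j, Finset.mem_range.mp hj, rfl⟩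
    refine ⟨?_, ?_, ?_⟩
    · intro p hp
      rcases hmemdesc p hp with rfl | ⟨j, hj, rfl⟩
      · constructor
        · rw [Finset.card_insert_of_notMem (by simp [hwg i]), Finset.card_singleton]
        · intro a ha
          rw [Finset.mem_insert, Finset.mem_singleton] at ha
          rcases ha with rfl | rfl
          · exact hvmem _
          · exact hvmem _
      · constructor
        · rw [Finset.card_insert_of_notMem, Finset.card_singleton]
          rw [Finset.mem_singleton]
          intro h
          exact hmix i (j+1) (j+1) (by omega) (by omega) (hginj h)
        · intro a ha
          rw [Finset.mem_insert, Finset.mem_singleton] at ha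
          rcases ha with rfl | rfl
          · exact hvmem _
          · exact hvmem _
    · -- pairwise disjoint within fac i0
      intro A hA B hB hne
      rw [Finset.mem_coe] at hA hB
      rcases hmemdesc A hA with rfl | ⟨j, hj, rfl⟩ <;>
        rcases hmemdesc B hB with rfl | ⟨j', hj', rfl⟩
      · exact absurd rfl hne
      · rw [Finset.disjoint_left]
        intro a ha hb
        rw [Finset.mem_insert, Finset.mem_singleton] at ha hb
        rcases ha with rfl | rfl <;> rcases hb with h | h
        · exact hwg _ h
        · exact hwg _ h
        · have h5 : i + ((0:ℕ) : ZMod q) = i + ((j'+1 : ℕ) : ZMod q) := by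
            simpa using hginj h
          have := haddinj i 0 (j'+1) (by omega) (by omega) h5
          omega
        · have h5 : i + ((0:ℕ) : ZMod q) = i - ((j'+1 : ℕ) : ZMod q) := by
            simpa using hginj h
          exact hmix i 0 (j'+1) (by omega) (by omega) h5
      · rw [Finset.disjoint_left]
        intro a ha hb
        rw [Finset.mem_insert, Finset.mem_singleton] at ha hb
        rcases ha with rfl | rfl <;> rcases hb with h | h
        · exact hwg _ h.symm
        · have h5 : i + ((0:ℕ) : ZMod q) = i + ((j+1 : ℕ) : ZMod q) := by
            simpa using hginj h.symm
          have := haddinj i 0 (j+1) (by omega) (by omega) h5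
          omega
        · exact hwg _ h.symm
        · have h5 : i + ((0:ℕ) : ZMod q) = i - ((j+1 : ℕ) : ZMod q) := by
            simpa using hginj h.symm
          exact hmix i 0 (j+1) (by omega) (by omega) h5
      · have hjj : j ≠ j' := by
          rintro rfl; exact hne rfl
        rw [Finset.disjoint_left]
        intro a ha hb
        rw [Finset.mem_insert, Finset.mem_singleton] at ha hb
        rcases ha with rfl | rfl <;> rcases hb with h | h
        · have := haddinj i (j+1) (j'+1) (by omega) (by omega) (hginj h)
          omega
        · exact hmix i (j+1) (j'+1) (by omega) (by omega) (hginj h)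
        · exact hmix i (j'+1) (j+1) (by omega) (by omega) (hginj h.symm)
        · have := hsubinj i (j+1) (j'+1) (by omega) (by omega) (hginj h)
          omega
    · -- card
      rw [hfac]
      rw [Finset.card_insert_of_notMem]
      · rw [Finset.card_image_of_injOn]
        · rw [Finset.card_range]
        · intro j hj j' hj' heq
          rw [Finset.mem_coe, Finset.mem_range] at hj hj'
          have heq2 : ({g (i + ((j+1 : ℕ) : ZMod q)), g (i - ((j+1 : ℕ) : ZMod q))} : Finset ℕ) =
              {g (i + ((j'+1 : ℕ) : ZMod q)), g (i - ((j'+1 : ℕ) : ZMod q))} := heq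
          have h1 : g (i + ((j+1 : ℕ) : ZMod q)) ∈
              ({g (i + ((j'+1 : ℕ) : ZMod q)), g (i - ((j'+1 : ℕ) : ZMod q))} : Finset ℕ) := by
            rw [← heq2]; exact Finset.mem_insert_self _ _
          rw [Finset.mem_insert, Finset.mem_singleton] at h1
          rcases h1 with h | h
          · have := haddinj i (j+1) (j'+1) (by omega) (by omega) (hginj h)
            omega
          · exact absurd (hginj h) (hmix i (j+1) (j'+1) (by omega) (by omega))
      · rw [Finset.mem_image]
        rintro ⟨j, hj, heq⟩
        have : winf ∈ ({g (i + ((j+1 : ℕ) : ZMod q)), g (i - ((j+1 : ℕ) : ZMod q))} : Finset ℕ) := by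
          rw [heq]; exact Finset.mem_insert_self _ _
        rw [Finset.mem_insert, Finset.mem_singleton] at this
        rcases this with h | h
        · exact hwg _ h
        · exact hwg _ h
  · -- cross-factor uniqueness
    intro p i0 hi0 j0 hj0 hpi hpj
    -- describe membership
    have desc : ∀ k0 : ℕ, p ∈ fac k0 → p = {winf, g (k0 : ZMod q)} ∨
        ∃ j < m, p = {g ((k0 : ZMod q) + ((j+1 : ℕ) : ZMod q)),
          g ((k0 : ZMod q) - ((j+1 : ℕ) : ZMod q))} := by
      intro k0 hp
      rw [hfac, Finset.mem_insert] at hp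
      rcases hp with h | h
      · exact Or.inl h
      · rw [Finset.mem_image] at h
        obtain ⟨j, hj, rfl⟩ := h
        exact Or.inr ⟨j, Finset.mem_range.mp hj, rfl⟩
    have hmain : (i0 : ZMod q) = (j0 : ZMod q) := by
      rcases desc i0 hpi with h1 | ⟨a, ha, h1⟩ <;> rcases desc j0 hpj with h2 | ⟨b, hb, h2⟩
      · -- both special
        have : g (i0 : ZMod q) ∈ ({winf, g (j0 : ZMod q)} : Finset ℕ) := by
          rw [← h2, h1]
          exact Finset.mem_insert_of_mem (Finset.mem_singleton_self _)
        rw [Finset.mem_insert, Finset.mem_singleton] at this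
        rcases this with h | h
        · exact absurd h.symm (hwg _)
        · exact hginj h
      · -- special vs image : impossible
        exfalso
        have : winf ∈ ({g ((j0 : ZMod q) + ((b+1 : ℕ) : ZMod q)),
            g ((j0 : ZMod q) - ((b+1 : ℕ) : ZMod q))} : Finset ℕ) := by
          rw [← h2, h1]
          exact Finset.mem_insert_self _ _
        rw [Finset.mem_insert, Finset.mem_singleton] at this
        rcases this with h | h
        · exact hwg _ h
        · exact hwg _ h
      · exfalso
        have : winf ∈ ({g ((i0 : ZMod q) + ((a+1 : ℕ) : ZMod q)),
            g ((i0 : ZMod q) - ((a+1 : ℕ) : ZMod q))} : Finset ℕ) := by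
          rw [← h1, h2]
          exact Finset.mem_insert_self _ _
        rw [Finset.mem_insert, Finset.mem_singleton] at this
        rcases this with h | h
        · exact hwg _ h
        · exact hwg _ h
      · -- image vs image
        set ia : ZMod q := (i0 : ZMod q)
        set jb : ZMod q := (j0 : ZMod q)
        have e1 : g (ia + ((a+1 : ℕ) : ZMod q)) ∈ ({g (jb + ((b+1 : ℕ) : ZMod q)),
            g (jb - ((b+1 : ℕ) : ZMod q))} : Finset ℕ) := by
          rw [← h2, h1]
          exact Finset.mem_insert_self _ _
        have e2 : g (ia - ((a+1 : ℕ) : ZMod q)) ∈ ({g (jb + ((b+1 : ℕ) : ZMod q)),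
            g (jb - ((b+1 : ℕ) : ZMod q))} : Finset ℕ) := by
          rw [← h2, h1]
          exact Finset.mem_insert_of_mem (Finset.mem_singleton_self _)
        rw [Finset.mem_insert, Finset.mem_singleton] at e1 e2
        have hsum : ia + ia = jb + jb := by
          rcases e1 with h1' | h1' <;> rcases e2 with h2' | h2'
          · -- + = + and - = + : then a+1 = -(a+1)?? derive directly
            have k1 := hginj h1'
            have k2 := hginj h2'
            exfalso
            -- ia - (a+1) = jb + (b+1) = ia + (a+1) - ... from k1 : ia + (a+1) = jb + (b+1)
            rw [← k1] at k2
            exact hmix ia (a+1) (a+1) (by omega) (by omega) k2.symm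
          · have k1 := hginj h1'
            have k2 := hginj h2'
            have : (ia + ((a+1 : ℕ) : ZMod q)) + (ia - ((a+1 : ℕ) : ZMod q)) =
                (jb + ((b+1 : ℕ) : ZMod q)) + (jb - ((b+1 : ℕ) : ZMod q)) := by rw [k1, k2]
            calc ia + ia = (ia + ((a+1 : ℕ) : ZMod q)) + (ia - ((a+1 : ℕ) : ZMod q)) := by ring
            _ = (jb + ((b+1 : ℕ) : ZMod q)) + (jb - ((b+1 : ℕ) : ZMod q)) := this
            _ = jb + jb := by ring
          · have k1 := hginj h1'
            have k2 := hginj h2'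
            have : (ia + ((a+1 : ℕ) : ZMod q)) + (ia - ((a+1 : ℕ) : ZMod q)) =
                (jb - ((b+1 : ℕ) : ZMod q)) + (jb + ((b+1 : ℕ) : ZMod q)) := by rw [k1, k2]
            calc ia + ia = (ia + ((a+1 : ℕ) : ZMod q)) + (ia - ((a+1 : ℕ) : ZMod q)) := by ring
            _ = (jb - ((b+1 : ℕ) : ZMod q)) + (jb + ((b+1 : ℕ) : ZMod q)) := this
            _ = jb + jb := by ring
          · have k1 := hginj h1'
            have k2 := hginj h2'
            exfalso
            rw [← k2] at k1
            exact hmix ia (a+1) (a+1) (by omega) (by omega) k1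
        exact htwo _ _ hsum
    exact hcasteq i0 j0 (by omega) (by omega) hmain

/-- Cyclic blocks of `h` consecutive members of a `p`-element family. -/
lemma exists_blocks {Mx : Finset (Finset ℕ)} {p h : ℕ} (hpc : Mx.card = p) (hp0 : 0 < p)
    (hhp : h ≤ p) :
    ∃ Rb : ℕ → Finset (Finset ℕ),
      (∀ j, Rb j ⊆ Mx ∧ (Rb j).card = h) ∧
      (∀ A ∈ Mx, ((Finset.range p).filter fun j => A ∈ Rb j).card ≤ h) := by
  classical
  set uu : ℕ → Finset ℕ := fun t => (Mx.equivFin.symm ⟨t % p, by rw [hpc]; exact Nat.mod_lt _ hp0⟩ : {A // A ∈ Mx}).val with huu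
  have huumem : ∀ t, uu t ∈ Mx := fun t => (Mx.equivFin.symm _).2
  have huuinj : ∀ t t', uu t = uu t' → t % p = t' % p := by
    intro t t' hEq
    have h1 := Mx.equivFin.symm.injective (Subtype.val_injective hEq)
    exact congrArg Fin.val h1
  set Rb : ℕ → Finset (Finset ℕ) := fun j => (Finset.range h).image fun t => uu (j + t) with hRb
  refine ⟨Rb, ?_, ?_⟩
  · intro j
    constructor
    · intro A hA
      rw [hRb, Finset.mem_image] at hA
      obtain ⟨t, _, rfl⟩ := hA
      exact huumem _
    · rw [hRb, Finset.card_image_of_injOn, Finset.card_range]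
      intro t ht t' ht' hEq
      rw [Finset.mem_coe, Finset.mem_range] at ht ht'
      have h1 := huuinj _ _ hEq
      have h2 : t ≡ t' [MOD p] := Nat.ModEq.add_left_cancel' j h1
      have h3 : t % p = t' % p := h2
      rw [Nat.mod_eq_of_lt (by omega), Nat.mod_eq_of_lt (by omega)] at h3
      exact h3
  · intro A hA
    have hex : ∀ j, A ∈ Rb j → ∃ t, t < h ∧ uu (j + t) = A := by
      intro j hj
      rw [hRb, Finset.mem_image] at hj
      obtain ⟨t, ht, h2⟩ := hj
      exact ⟨t, Finset.mem_range.mp ht, h2⟩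
    set f : ℕ → ℕ := fun j => if hj : A ∈ Rb j then Classical.choose (hex j hj) else 0 with hf
    have hle : ((Finset.range p).filter fun j => A ∈ Rb j).card ≤ (Finset.range h).card := by
      apply Finset.card_le_card_of_injOn f
      · intro j hj
        rw [Finset.mem_coe, Finset.mem_filter] at hj
        simp only [hf, dif_pos hj.2]
        have := (Classical.choose_spec (hex j hj.2)).1
        exact Finset.mem_range.mpr this
      · intro j1 hj1 j2 hj2 hEq
        rw [Finset.coe_filter, Set.mem_setOf_eq] at hj1 hj2
        have hm1 := hj1.2
        have hm2 := hj2.2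
        simp only [hf, dif_pos hm1, dif_pos hm2] at hEq
        obtain ⟨ht1, he1⟩ := Classical.choose_spec (hex j1 hm1)
        obtain ⟨ht2, he2⟩ := Classical.choose_spec (hex j2 hm2)
        have he12 := he1.trans he2.symm
        have h1 := huuinj _ _ he12
        rw [hEq] at h1
        have h2 : j1 ≡ j2 [MOD p] := Nat.ModEq.add_right_cancel' _ h1
        have h3 : j1 % p = j2 % p := h2
        rw [Nat.mod_eq_of_lt (Finset.mem_range.mp hj1.1),
          Nat.mod_eq_of_lt (Finset.mem_range.mp hj2.1)] at h3
        exact h3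
    simpa using hle

end Helpers2

section Helpers3

set_option maxHeartbeats 1000000 in
/-- For each good pair `Q`, many bad mixed pairs exist. -/
lemma cnt_lower
    {F : Finset (Finset ℕ)} {s l c d n : ℕ}
    (hl0 : 0 < l)
    (hcl : c + l = s) (hn : n = 2*l + 3*c) (hd : Even d) (hd4 : 4 ≤ d) (hdc : d ≤ c + 1)
    (hnu : matchingNumber F < s)
    {x : ℕ} (hx : x ∈ Finset.Icc 1 (2*l+d-1))
    {Mx : Finset (Finset ℕ)} (hMxF : Mx ⊆ F)
    (hMxp : (Mx : Set (Finset ℕ)).Pairwise fun A B => Disjoint A B)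
    (hMxmem : ∀ A ∈ Mx, A.card = 2 ∧ A ⊆ (Finset.Icc 1 (2*l+d-1)).erase x)
    (hMxcard : Mx.card = l + (d-2)/2)
    {Mt : Finset (Finset ℕ)} (hMtF : Mt ⊆ F)
    (hMtp : (Mt : Set (Finset ℕ)).Pairwise fun A B => Disjoint A B)
    (hMtmem : ∀ A ∈ Mt, A.card = 3 ∧ A ⊆ Finset.Icc (2*l+d) n)
    (hMtcard : Mt.card = c + 1 - d)
    {Q : Finset ℕ} (hQ : Q ⊆ (Finset.Icc (2*l+d) n) \ (Mt.biUnion id)) (hQcard : Q.card = 2)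
    (hQF : insert x Q ∈ F) :
    (2*l+d-2) * (2*d-5) ≤
      ((((Finset.Icc 1 (2*l+d-1)).erase x) ×ˢ
        ((((Finset.Icc (2*l+d) n) \ (Mt.biUnion id)) \ Q).powersetCard 2)).filter
        fun y => insert y.1 y.2 ∉ F).card := by
  classical
  obtain ⟨dk, hdk⟩ := hd
  set hh := (d-2)/2 with hhh
  have h2h : 2 * hh = d - 2 := by omega
  set T : Finset ℕ := (Finset.Icc (2*l+d) n) \ (Mt.biUnion id) with hT
  -- cardinality of T \ Q
  have hsupp : (Mt.biUnion id) ⊆ Finset.Icc (2*l+d) n := by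
    intro a ha
    rw [Finset.mem_biUnion] at ha
    obtain ⟨A, hA, haA⟩ := ha
    exact (hMtmem A hA).2 haA
  have hsuppcard : (Mt.biUnion id).card = 3 * (c + 1 - d) := by
    rw [card_biUnion_of_pairwise hMtp (fun A hA => (hMtmem A hA).1), hMtcard]
  have hTcard : T.card = 2*d - 2 := by
    rw [hT, Finset.card_sdiff_of_subset hsupp, hsuppcard, Nat.card_Icc]
    omega
  have hQT : Q ⊆ T := hQ
  have hTQcard : (T \ Q).card = 2*(d-3) + 2 := by
    rw [Finset.card_sdiff_of_subset hQT, hTcard, hQcard]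
    omega
  -- factorization and blocks
  obtain ⟨fac, hfac1, hfac2⟩ := exists_factorization (by omega : 1 ≤ d-3) hTQcard
  obtain ⟨Rb, hRb1, hRb2⟩ := exists_blocks hMxcard (by omega : 0 < l + (d-2)/2)
    (by omega : (d-2)/2 ≤ l + (d-2)/2)
  set p := l + (d-2)/2 with hp
  set W : ℕ → Finset ℕ := fun j => (Rb j).biUnion id with hW
  have hWcard : ∀ j, (W j).card = d - 2 := by
    intro j
    rw [hW]
    rw [card_biUnion_of_pairwise (hMxp.mono (Finset.coe_subset.mpr (hRb1 j).1))
      (fun A hA => (hMxmem A ((hRb1 j).1 hA)).1), (hRb1 j).2]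
    omega
  have hWsub : ∀ j, ∀ w ∈ W j, w ∈ (Finset.Icc 1 (2*l+d-1)).erase x := by
    intro j w hw
    rw [hW, Finset.mem_biUnion] at hw
    obtain ⟨A, hA, hwA⟩ := hw
    exact (hMxmem A ((hRb1 j).1 hA)).2 hwA
  -- the per-(i,j) bad sets
  set Bd : ℕ → ℕ → Finset (ℕ × Finset ℕ) := fun i j =>
    ((W j ×ˢ fac i).filter fun y => insert y.1 y.2 ∉ F) with hBd
  have hBdlow : ∀ i j, d - 2 ≤ (Bd i j).card := by
    intro i j
    by_contra hcon
    push_neg at hcon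
    obtain ⟨σ, hσinj, hσW, hσF⟩ := hall_step (F := F) (hWcard j)
      (by rw [(hfac1 i).2.2]; omega) hcon
    refine claimA hcl hn (by omega) hdc hnu hx hMxF hMxp hMxmem hMxcard hMtF hMtp hMtmem
      hMtcard hQ hQcard hQF ((hRb1 j).1) ((hRb1 j).2) ?_ ((hfac1 i).2.1) ?_ hσinj ?_ hσF
    · intro pp hpp
      exact (hfac1 i).1 pp hpp
    · rw [(hfac1 i).2.2]; omega
    · intro pp hpp
      exact hσW pp hpp
  -- the global count set
  set cntSet : Finset (ℕ × Finset ℕ) :=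
    ((((Finset.Icc 1 (2*l+d-1)).erase x) ×ˢ ((T \ Q).powersetCard 2)).filter
      fun y => insert y.1 y.2 ∉ F) with hcntSet
  have hBdeq : ∀ i j, Bd i j = cntSet.filter (fun y => y.1 ∈ W j ∧ y.2 ∈ fac i) := by
    intro i j
    ext y
    rw [hBd, hcntSet, Finset.mem_filter, Finset.mem_filter, Finset.mem_filter,
      Finset.mem_product, Finset.mem_product]
    constructor
    · rintro ⟨⟨h1, h2⟩, h3⟩
      have h4 := (hfac1 i).1 y.2 h2
      exact ⟨⟨⟨hWsub j y.1 h1, Finset.mem_powersetCard.mpr ⟨h4.2, h4.1⟩⟩, h3⟩, h1, h2⟩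
    · rintro ⟨⟨⟨h1, h2⟩, h3⟩, h4, h5⟩
      exact ⟨⟨h4, h5⟩, h3⟩
  -- count of factors containing a fixed pair is at most 1
  have hfaccnt : ∀ P : Finset ℕ, ((Finset.range (2*d-5)).filter fun i => P ∈ fac i).card ≤ 1 := by
    intro P
    rw [Finset.card_le_one]
    intro i1 hi1 i2 hi2
    rw [Finset.mem_filter, Finset.mem_range] at hi1 hi2
    exact hfac2 P i1 (by omega) i2 (by omega) hi1.2 hi2.2
  -- count of blocks containing a fixed point is at most hh
  have hWcnt : ∀ w : ℕ, ((Finset.range p).filter fun j => w ∈ W j).card ≤ hh := by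
    intro w
    rcases Finset.eq_empty_or_nonempty ((Finset.range p).filter fun j => w ∈ W j) with he | hne
    · rw [he]; simp
    · obtain ⟨j0, hj0⟩ := hne
      rw [Finset.mem_filter] at hj0
      have hj0W := hj0.2
      rw [hW, Finset.mem_biUnion] at hj0W
      obtain ⟨A0, hA0, hwA0⟩ := hj0W
      have hA0Mx : A0 ∈ Mx := (hRb1 j0).1 hA0
      have hsub : ((Finset.range p).filter fun j => w ∈ W j) ⊆
          ((Finset.range p).filter fun j => A0 ∈ Rb j) := by
        intro j hj
        rw [Finset.mem_filter] at hj ⊢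
        refine ⟨hj.1, ?_⟩
        have hj2 := hj.2
        rw [hW, Finset.mem_biUnion] at hj2
        obtain ⟨A', hA', hwA'⟩ := hj2
        have hA'Mx : A' ∈ Mx := (hRb1 j).1 hA'
        have : A' = A0 := by
          by_contra hne2
          exact (Finset.disjoint_left.mp (hMxp (Finset.mem_coe.mpr hA'Mx)
            (Finset.mem_coe.mpr hA0Mx) hne2) hwA') hwA0
        rwa [this] at hA'
      exact le_trans (Finset.card_le_card hsub) (hRb2 A0 hA0Mx)
  -- double counting
  have hsum_up : ∑ i ∈ Finset.range (2*d-5), ∑ j ∈ Finset.range p, (Bd i j).card ≤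
      cntSet.card * hh := by
    have hstep : ∀ i j, (Bd i j).card =
        ∑ y ∈ cntSet, (if y.1 ∈ W j ∧ y.2 ∈ fac i then 1 else 0) := by
      intro i j
      rw [hBdeq i j, Finset.card_filter]
    calc ∑ i ∈ Finset.range (2*d-5), ∑ j ∈ Finset.range p, (Bd i j).card
        = ∑ i ∈ Finset.range (2*d-5), ∑ j ∈ Finset.range p,
            ∑ y ∈ cntSet, (if y.1 ∈ W j ∧ y.2 ∈ fac i then 1 else 0) := by
          exact Finset.sum_congr rfl fun i _ => Finset.sum_congr rfl fun j _ => hstep i j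
      _ = ∑ i ∈ Finset.range (2*d-5), ∑ y ∈ cntSet, ∑ j ∈ Finset.range p,
            (if y.1 ∈ W j ∧ y.2 ∈ fac i then 1 else 0) :=
          Finset.sum_congr rfl fun i _ => Finset.sum_comm
      _ = ∑ y ∈ cntSet, ∑ i ∈ Finset.range (2*d-5), ∑ j ∈ Finset.range p,
            (if y.1 ∈ W j ∧ y.2 ∈ fac i then 1 else 0) :=
          Finset.sum_comm
      _ ≤ ∑ _y ∈ cntSet, hh := by
          apply Finset.sum_le_sum
          intro y _
          have hexp : ∑ i ∈ Finset.range (2*d-5), ∑ j ∈ Finset.range p,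
              (if y.1 ∈ W j ∧ y.2 ∈ fac i then 1 else 0) =
              (((Finset.range (2*d-5)).filter fun i => y.2 ∈ fac i).card *
               ((Finset.range p).filter fun j => y.1 ∈ W j).card) := by
            rw [Finset.card_filter, Finset.card_filter, Finset.sum_mul_sum]
            apply Finset.sum_congr rfl
            intro i _
            apply Finset.sum_congr rfl
            intro j _
            by_cases h1 : y.2 ∈ fac i <;> by_cases h2 : y.1 ∈ W j <;> simp [h1, h2]
          rw [hexp]
          calc ((Finset.range (2*d-5)).filter fun i => y.2 ∈ fac i).card *
               ((Finset.range p).filter fun j => y.1 ∈ W j).card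
              ≤ 1 * hh := Nat.mul_le_mul (hfaccnt y.2) (hWcnt y.1)
            _ = hh := one_mul hh
      _ = cntSet.card * hh := by
          rw [Finset.sum_const, smul_eq_mul]
  have hsum_low : (2*d-5) * (p * (d-2)) ≤
      ∑ i ∈ Finset.range (2*d-5), ∑ j ∈ Finset.range p, (Bd i j).card := by
    calc (2*d-5) * (p * (d-2)) = ∑ _i ∈ Finset.range (2*d-5), ∑ _j ∈ Finset.range p, (d-2) := by
          rw [Finset.sum_const, Finset.card_range, smul_eq_mul, Finset.sum_const,
            Finset.card_range, smul_eq_mul]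
      _ ≤ _ := Finset.sum_le_sum fun i _ => Finset.sum_le_sum fun j _ => hBdlow i j
  -- combine
  have hfinal : (2*d-5) * (p * (d-2)) ≤ cntSet.card * hh := le_trans hsum_low hsum_up
  have hhh0 : 0 < hh := by omega
  have hkey : (2*l+d-2) * (2*d-5) ≤ cntSet.card := by
    have hpval : p = l + hh := by rw [hp, hhh]
    have h1 : (2*d-5) * (p * (d-2)) = ((2*l+d-2) * (2*d-5)) * hh := by
      have e2 : 2*l+d-2 = 2*(l+hh) := by omega
      rw [hpval, e2, ← h2h]
      ring
    rw [h1] at hfinal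
    exact Nat.le_of_mul_le_mul_right hfinal hhh0
  exact hkey

end Helpers3

set_option maxHeartbeats 1600000 in
theorem stmt_13 (n s l c d : ℕ) (hs0 : 0 < s) (hl0 : 0 < l) (hc0 : 0 < c)
    (hcl : c + l = s) (hn : n = 2 * l + 3 * c)
    (F : Finset (Finset ℕ)) (hF : ∀ A ∈ F, A ⊆ ground n) (hsh : IsShifted n F)
    (hnu : matchingNumber F < s)
    (hd : Even d) (hd2 : 2 ≤ d) (hdc : d ≤ c + 1) (hdF : d ≤ dF l F)
    (X : Finset ℕ) (hX : X ⊆ Finset.Icc 1 (2 * l + d - 1))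
    (hXm : ∀ x ∈ X, l + (d - 2) / 2 ≤
      matchingNumber (F ∩ ((Finset.Icc 1 (2 * l + d - 1)).erase x).powersetCard 2))
    (hm : c + 1 - d ≤ matchingNumber (F ∩ (Finset.Icc (2 * l + d) n).powersetCard 3)) :
    (X.card : ℝ) * (Nat.choose (2 * d - 2) 2 : ℝ) *
        (1 - (((2 * l + d - 2) * (d - 2) : ℕ) : ℝ) / (((d - 2) * X.card + 2 * l : ℕ) : ℝ))
      ≤ (yF n F 3 : ℝ) := by
  classical
  obtain ⟨dk, hdk⟩ := hd
  -- extract the triple matching Mt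
  obtain ⟨Mt, hMtF, hMtp, hMtmem, hMtcard⟩ :
      ∃ Mt : Finset (Finset ℕ), Mt ⊆ F ∧
        ((Mt : Set (Finset ℕ)).Pairwise fun A B => Disjoint A B) ∧
        (∀ A ∈ Mt, A.card = 3 ∧ A ⊆ Finset.Icc (2*l+d) n) ∧ Mt.card = c + 1 - d := by
    rcases Nat.eq_zero_or_pos (c + 1 - d) with h0 | hpos
    · exact ⟨∅, by simp, by simp, by simp, by simp [h0]⟩
    · obtain ⟨M, hMsub, hMp, hMc⟩ := exists_matching hpos hm
      refine ⟨M, ?_, hMp, ?_, hMc⟩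
      · intro A hA; exact (Finset.mem_inter.mp (hMsub hA)).1
      · intro A hA
        have h1 := (Finset.mem_inter.mp (hMsub hA)).2
        rw [Finset.mem_powersetCard] at h1
        exact ⟨h1.2, h1.1⟩
  set T : Finset ℕ := (Finset.Icc (2*l+d) n) \ (Mt.biUnion id) with hT
  -- card of T
  have hsupp : (Mt.biUnion id) ⊆ Finset.Icc (2*l+d) n := by
    intro a ha
    rw [Finset.mem_biUnion] at ha
    obtain ⟨A, hA, haA⟩ := ha
    exact (hMtmem A hA).2 haA
  have hsuppcard : (Mt.biUnion id).card = 3 * (c + 1 - d) := by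
    rw [card_biUnion_of_pairwise hMtp (fun A hA => (hMtmem A hA).1), hMtcard]
  have hTcard : T.card = 2*d - 2 := by
    rw [hT, Finset.card_sdiff_of_subset hsupp, hsuppcard, Nat.card_Icc]
    omega
  have hThigh : ∀ a ∈ T, 2*l+d ≤ a ∧ a ≤ n := by
    intro a ha
    have h1 := Finset.mem_sdiff.mp ha
    rw [Finset.mem_Icc] at h1
    exact ⟨h1.1.1, h1.1.2⟩
  -- the global bad set
  set B : Finset (ℕ × Finset ℕ) :=
    (((Finset.Icc 1 (2*l+d-1)) ×ˢ T.powersetCard 2).filter fun y => insert y.1 y.2 ∉ F)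
    with hB
  set C2 : ℕ := Nat.choose (2*d-2) 2 with hC2
  -- master inequality per x ∈ X
  have master : ∀ x ∈ X,
      C2 * (2*l+d-2) ≤ 2*l * (B.filter fun y => y.1 = x).card + (d-2) * B.card := by
    intro x hxX
    have hxI : x ∈ Finset.Icc 1 (2*l+d-1) := hX hxX
    -- extract Mx
    obtain ⟨Mx, hMxsub, hMxp, hMxcard⟩ := exists_matching (by omega : 0 < l + (d-2)/2) (hXm x hxX)
    have hMxF : Mx ⊆ F := fun A hA => (Finset.mem_inter.mp (hMxsub hA)).1
    have hMxmem : ∀ A ∈ Mx, A.card = 2 ∧ A ⊆ (Finset.Icc 1 (2*l+d-1)).erase x := by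
      intro A hA
      have h1 := (Finset.mem_inter.mp (hMxsub hA)).2
      rw [Finset.mem_powersetCard] at h1
      exact ⟨h1.2, h1.1⟩
    set Good : Finset (Finset ℕ) := (T.powersetCard 2).filter (fun Q => insert x Q ∈ F)
      with hGood
    set Badx : Finset (Finset ℕ) := (T.powersetCard 2).filter (fun Q => ¬ insert x Q ∈ F)
      with hBadx
    have hsplit : Good.card + Badx.card = C2 := by
      rw [hGood, hBadx, Finset.card_filter_add_card_filter_not,
        Finset.card_powersetCard, hTcard, hC2]
    set zx : ℕ := (B.filter fun y => y.1 = x).card with hzx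
    set rx : ℕ := (B.filter fun y => ¬ y.1 = x).card with hrx
    have hzrest : zx + rx = B.card := by
      rw [hzx, hrx, Finset.card_filter_add_card_filter_not]
    -- Badx.card = zx
    have hzbad : Badx.card = zx := by
      rw [hzx]
      apply Finset.card_bij' (fun Q _ => ((x, Q) : ℕ × Finset ℕ)) (fun y _ => y.2)
      · intro Q hQ
        rw [hBadx, Finset.mem_filter] at hQ
        rw [Finset.mem_filter, hB, Finset.mem_filter, Finset.mem_product]
        exact ⟨⟨⟨hxI, hQ.1⟩, hQ.2⟩, rfl⟩
      · intro y hy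
        rw [Finset.mem_filter, hB, Finset.mem_filter, Finset.mem_product] at hy
        rw [hBadx, Finset.mem_filter]
        refine ⟨hy.1.1.2, ?_⟩
        have h2 := hy.1.2
        rw [hy.2] at h2
        exact h2
      · intro Q hQ; rfl
      · intro y hy
        rw [Finset.mem_filter] at hy
        obtain ⟨y1, y2⟩ := y
        simp only at hy ⊢
        rw [hy.2]
    -- the star inequality
    have star : Good.card * (2*l+d-2) ≤ (d-2) * rx := by
      rcases Nat.lt_or_ge d 4 with hdlt | hd4
      · -- d = 2 : no good pairs at all
        have hdeq : d = 2 := by omega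
        have hGoodempty : Good = ∅ := by
          rw [Finset.eq_empty_iff_forall_notMem]
          intro Q hQ
          rw [hGood, Finset.mem_filter, Finset.mem_powersetCard] at hQ
          refine claimA hcl hn hd2 hdc hnu hxI hMxF hMxp hMxmem hMxcard hMtF hMtp hMtmem
            hMtcard (hQ.1.1) (hQ.1.2) (hQ.2) (Finset.empty_subset Mx)
            (by simp [hdeq]) (P := ∅) (by simp) (by simp) (by simp [hdeq])
            (σ := fun _ => 0) (by simp) (by simp) (by simp)
        rw [hGoodempty]
        simp
      · -- d ≥ 4 : counting
        have hQcnt : ∀ Q ∈ Good, (2*l+d-2)*(2*d-5) ≤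
            (rx.succ * 0 + ((((Finset.Icc 1 (2*l+d-1)).erase x) ×ˢ
              ((T \ Q).powersetCard 2)).filter fun y => insert y.1 y.2 ∉ F).card) := by
          intro Q hQ
          rw [hGood, Finset.mem_filter, Finset.mem_powersetCard] at hQ
          have := cnt_lower hl0 hcl hn ⟨dk, hdk⟩ hd4 hdc hnu hxI hMxF hMxp hMxmem hMxcard
            hMtF hMtp hMtmem hMtcard hQ.1.1 hQ.1.2 hQ.2
          simpa using this
        -- rewrite each count as a filter of the restricted bad set
        have hcnt_eq : ∀ Q ∈ Good,
            ((((Finset.Icc 1 (2*l+d-1)).erase x) ×ˢ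
              ((T \ Q).powersetCard 2)).filter fun y => insert y.1 y.2 ∉ F) =
            (B.filter fun y => ¬ y.1 = x).filter (fun y => Disjoint y.2 Q) := by
          intro Q hQ
          ext y
          rw [Finset.mem_filter, Finset.mem_filter, Finset.mem_filter, hB, Finset.mem_filter,
            Finset.mem_product, Finset.mem_product, Finset.mem_powersetCard,
            Finset.mem_powersetCard, Finset.mem_erase, Finset.subset_sdiff]
          constructor
          · rintro ⟨⟨⟨hne, hIcc⟩, ⟨⟨hsubT, hdisj⟩, hcard⟩⟩, hmiss⟩
            exact ⟨⟨⟨⟨hIcc, ⟨hsubT, hcard⟩⟩, hmiss⟩, hne⟩, hdisj⟩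
          · rintro ⟨⟨⟨⟨hIcc, ⟨hsubT, hcard⟩⟩, hmiss⟩, hne⟩, hdisj⟩
            exact ⟨⟨⟨hne, hIcc⟩, ⟨⟨hsubT, hdisj⟩, hcard⟩⟩, hmiss⟩
        -- sum over good Q
        have hsumlow : Good.card * ((2*l+d-2)*(2*d-5)) ≤
            ∑ Q ∈ Good, ((B.filter fun y => ¬ y.1 = x).filter (fun y => Disjoint y.2 Q)).card := by
          calc Good.card * ((2*l+d-2)*(2*d-5))
              = ∑ _Q ∈ Good, (2*l+d-2)*(2*d-5) := by
                rw [Finset.sum_const, smul_eq_mul]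
            _ ≤ _ := by
                apply Finset.sum_le_sum
                intro Q hQ
                have h1 := hQcnt Q hQ
                rw [hcnt_eq Q hQ] at h1
                simpa using h1
        have hsumup : ∑ Q ∈ Good,
            ((B.filter fun y => ¬ y.1 = x).filter (fun y => Disjoint y.2 Q)).card ≤
            rx * ((d-2)*(2*d-5)) := by
          calc ∑ Q ∈ Good, ((B.filter fun y => ¬ y.1 = x).filter (fun y => Disjoint y.2 Q)).card
              = ∑ Q ∈ Good, ∑ y ∈ (B.filter fun y => ¬ y.1 = x),
                  (if Disjoint y.2 Q then 1 else 0) := by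
                exact Finset.sum_congr rfl fun Q _ => Finset.card_filter _ _
            _ = ∑ y ∈ (B.filter fun y => ¬ y.1 = x), ∑ Q ∈ Good,
                  (if Disjoint y.2 Q then 1 else 0) := Finset.sum_comm
            _ ≤ ∑ _y ∈ (B.filter fun y => ¬ y.1 = x), (d-2)*(2*d-5) := by
                apply Finset.sum_le_sum
                intro y hy
                have h1 : (∑ Q ∈ Good, if Disjoint y.2 Q then 1 else 0)
                    = (Good.filter (fun Q => Disjoint y.2 Q)).card :=
                  (Finset.card_filter _ _).symm
                rw [h1]
                -- y.2 is a 2-subset of T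
                rw [Finset.mem_filter, hB, Finset.mem_filter, Finset.mem_product] at hy
                have hy2 := hy.1.1.2
                rw [Finset.mem_powersetCard] at hy2
                have hsub2 : Good.filter (fun Q => Disjoint y.2 Q) ⊆
                    (T \ y.2).powersetCard 2 := by
                  intro Q hQ
                  rw [Finset.mem_filter, hGood, Finset.mem_filter, Finset.mem_powersetCard] at hQ
                  rw [Finset.mem_powersetCard, Finset.subset_sdiff]
                  exact ⟨⟨hQ.1.1.1, hQ.2.symm⟩, hQ.1.1.2⟩
                have hcard2 : ((T \ y.2).powersetCard 2).card = (d-2)*(2*d-5) := by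
                  rw [Finset.card_powersetCard, Finset.card_sdiff_of_subset hy2.1, hTcard, hy2.2]
                  rw [Nat.choose_two_right]
                  have e1 : 2*d-2-2 = 2*(d-2) := by omega
                  rw [e1]
                  have e2 : 2*(d-2) - 1 = 2*d-5 := by omega
                  rw [e2]
                  have e3 : 2*(d-2)*(2*d-5) = (d-2)*(2*d-5)*2 := by ring
                  rw [e3, Nat.mul_div_cancel _ (by norm_num)]
                calc (Good.filter (fun Q => Disjoint y.2 Q)).card
                    ≤ ((T \ y.2).powersetCard 2).card := Finset.card_le_card hsub2
                  _ = (d-2)*(2*d-5) := hcard2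
            _ = rx * ((d-2)*(2*d-5)) := by
                rw [Finset.sum_const, smul_eq_mul, hrx]
        have hcomb : Good.card * ((2*l+d-2)*(2*d-5)) ≤ rx * ((d-2)*(2*d-5)) :=
          le_trans hsumlow hsumup
        have h25 : 0 < 2*d-5 := by omega
        have hrew1 : Good.card * ((2*l+d-2)*(2*d-5)) = (Good.card * (2*l+d-2)) * (2*d-5) := by
          ring
        have hrew2 : rx * ((d-2)*(2*d-5)) = ((d-2) * rx) * (2*d-5) := by ring
        rw [hrew1, hrew2] at hcomb
        exact Nat.le_of_mul_le_mul_right hcomb h25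
    -- assemble master
    have e0 : 2*l+d-2 = 2*l + (d-2) := by omega
    calc C2 * (2*l+d-2) = (Good.card + Badx.card) * (2*l+d-2) := by rw [hsplit]
      _ = Good.card * (2*l+d-2) + Badx.card * (2*l+d-2) := by ring
      _ ≤ (d-2) * rx + Badx.card * (2*l+d-2) := by
          exact Nat.add_le_add_right star _
      _ = (d-2) * rx + zx * (2*l+d-2) := by rw [hzbad]
      _ = 2*l*zx + (d-2)*(rx + zx) := by rw [e0]; ring
      _ = 2*l*zx + (d-2)*B.card := by
          have : rx + zx = B.card := by omega
          rw [this]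
  -- sum the master inequality over X
  have hsumz : ∑ x ∈ X, (B.filter fun y => y.1 = x).card ≤ B.card := by
    have hdisjf : ∀ x1 ∈ X, ∀ x2 ∈ X, x1 ≠ x2 →
        Disjoint (B.filter fun y => y.1 = x1) (B.filter fun y => y.1 = x2) := by
      intro x1 _ x2 _ hne
      rw [Finset.disjoint_left]
      intro y hy1 hy2
      rw [Finset.mem_filter] at hy1 hy2
      exact hne (hy1.2 ▸ hy2.2 ▸ rfl)
    calc ∑ x ∈ X, (B.filter fun y => y.1 = x).card
        = (X.biUnion fun x => B.filter fun y => y.1 = x).card :=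
          (Finset.card_biUnion hdisjf).symm
      _ ≤ B.card := Finset.card_le_card (by
          intro y hy
          rw [Finset.mem_biUnion] at hy
          obtain ⟨x, _, hyx⟩ := hy
          exact Finset.mem_filter.mp hyx |>.1)
  have key : X.card * (C2 * (2*l+d-2)) ≤ B.card * ((d-2)*X.card + 2*l) := by
    calc X.card * (C2 * (2*l+d-2)) = ∑ _x ∈ X, C2 * (2*l+d-2) := by
          rw [Finset.sum_const, smul_eq_mul]
      _ ≤ ∑ x ∈ X, (2*l * (B.filter fun y => y.1 = x).card + (d-2) * B.card) :=
          Finset.sum_le_sum master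
      _ = 2*l * (∑ x ∈ X, (B.filter fun y => y.1 = x).card) + X.card * ((d-2) * B.card) := by
          rw [Finset.sum_add_distrib, ← Finset.mul_sum, Finset.sum_const, smul_eq_mul]
      _ ≤ 2*l * B.card + X.card * ((d-2) * B.card) := by
          exact Nat.add_le_add_right (Nat.mul_le_mul_left _ hsumz) _
      _ = B.card * ((d-2)*X.card + 2*l) := by ring
  -- B.card is at most yF n F 3
  have hyFB : B.card ≤ yF n F 3 := by
    have hij : ∀ y ∈ B, ∀ y' ∈ B, insert y.1 y.2 = insert y'.1 y'.2 → y = y' := by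
      intro y hy y' hy' heq
      rw [hB, Finset.mem_filter, Finset.mem_product] at hy hy'
      have hy1low : y.1 < 2*l+d := by
        have := hy.1.1; rw [Finset.mem_Icc] at this; omega
      have hy1low' : y'.1 < 2*l+d := by
        have := hy'.1.1; rw [Finset.mem_Icc] at this; omega
      have hy2high : ∀ a ∈ y.2, 2*l+d ≤ a := by
        intro a ha
        have h2 := hy.1.2; rw [Finset.mem_powersetCard] at h2
        exact (hThigh a (h2.1 ha)).1
      have hy2high' : ∀ a ∈ y'.2, 2*l+d ≤ a := by
        intro a ha
        have h2 := hy'.1.2; rw [Finset.mem_powersetCard] at h2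
        exact (hThigh a (h2.1 ha)).1
      have h11 : y.1 = y'.1 := by
        have h1 : y.1 ∈ insert y'.1 y'.2 := by
          rw [← heq]; exact Finset.mem_insert_self _ _
        rw [Finset.mem_insert] at h1
        rcases h1 with h1 | h1
        · exact h1
        · have := hy2high' _ h1; omega
      have hnotmem : y.1 ∉ y.2 := fun hmem => by have := hy2high _ hmem; omega
      have hnotmem' : y'.1 ∉ y'.2 := fun hmem => by have := hy2high' _ hmem; omega
      have h22 : y.2 = y'.2 := by
        have e1 : (insert y.1 y.2).erase y.1 = y.2 := Finset.erase_insert hnotmem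
        have e2 : (insert y'.1 y'.2).erase y'.1 = y'.2 := Finset.erase_insert hnotmem'
        rw [← e1, ← e2, heq, h11]
      obtain ⟨a1, a2⟩ := y
      obtain ⟨b1, b2⟩ := y'
      simp only at h11 h22
      rw [h11, h22]
    have himgsub : B.image (fun y => insert y.1 y.2) ⊆ (ground n).powersetCard 3 := by
      intro A hA
      rw [Finset.mem_image] at hA
      obtain ⟨y, hy, rfl⟩ := hA
      rw [hB, Finset.mem_filter, Finset.mem_product] at hy
      have hy2 := hy.1.2
      rw [Finset.mem_powersetCard] at hy2
      have hy1low : 1 ≤ y.1 ∧ y.1 ≤ 2*l+d-1 := by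
        have := hy.1.1; rw [Finset.mem_Icc] at this; exact this
      rw [Finset.mem_powersetCard]
      constructor
      · intro a ha
        rw [Finset.mem_insert] at ha
        rw [ground, Finset.mem_Icc]
        rcases ha with rfl | ha
        · omega
        · have := hThigh a (hy2.1 ha); omega
      · rw [Finset.card_insert_of_notMem, hy2.2]
        intro hmem
        have := (hThigh y.1 (hy2.1 hmem)).1
        omega
    have hdisj2 : Disjoint (B.image (fun y => insert y.1 y.2)) (layer n F 3) := by
      rw [Finset.disjoint_left]
      intro A hA hA2
      rw [Finset.mem_image] at hA
      obtain ⟨y, hy, rfl⟩ := hA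
      rw [hB, Finset.mem_filter] at hy
      rw [layer, Finset.mem_inter] at hA2
      exact hy.2 hA2.1
    have himgcard : (B.image (fun y => insert y.1 y.2)).card = B.card :=
      Finset.card_image_of_injOn (fun y hy y' hy' heq =>
        hij y (Finset.mem_coe.mp hy) y' (Finset.mem_coe.mp hy') heq)
    have hlayersub : layer n F 3 ⊆ (ground n).powersetCard 3 := by
      rw [layer]; exact Finset.inter_subset_right
    have hunion : (B.image (fun y => insert y.1 y.2)) ∪ layer n F 3 ⊆
        (ground n).powersetCard 3 := Finset.union_subset himgsub hlayersub
    have hcards : B.card + (layer n F 3).card ≤ Nat.choose n 3 := by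
      have h1 := Finset.card_le_card hunion
      rw [Finset.card_union_of_disjoint hdisj2, himgcard, Finset.card_powersetCard] at h1
      have hg : (ground n).card = n := by rw [ground, Nat.card_Icc]; omega
      rwa [hg] at h1
    rw [yF]
    omega
  -- pass to the reals
  have hXcard : X.card ≤ 2*l+d-1 := by
    have h1 := Finset.card_le_card hX
    rwa [Nat.card_Icc] at h1
    
  have hDle : (d-2)*X.card + 2*l ≤ (2*l+d-2) + (2*l+d-2)*(d-2) := by
    have h1 : (d-2)*X.card ≤ (d-2)*(2*l+d-1) := Nat.mul_le_mul_left _ hXcard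
    have h2 : (d-2)*(2*l+d-1) + 2*l = (2*l+d-2) + (2*l+d-2)*(d-2) := by
      have e1 : 2*l+d-1 = (2*l+d-2)+1 := by omega
      rw [e1]
      have e2 : (d-2)*((2*l+d-2)+1) = (d-2)*(2*l+d-2) + (d-2) := by ring
      rw [e2]
      have e3 : d-2+2*l = 2*l+d-2 := by omega
      calc (d-2)*(2*l+d-2) + (d-2) + 2*l = (d-2)*(2*l+d-2) + (d-2+2*l) := by ring
        _ = (d-2)*(2*l+d-2) + (2*l+d-2) := by rw [e3]
        _ = (2*l+d-2) + (2*l+d-2)*(d-2) := by ring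
    omega
  have hD0 : (0:ℝ) < (((d-2)*X.card + 2*l : ℕ) : ℝ) := by
    have : 0 < (d-2)*X.card + 2*l := by omega
    exact_mod_cast this
  set Dr : ℝ := (((d-2)*X.card + 2*l : ℕ) : ℝ) with hDr
  set Nr : ℝ := (((2*l+d-2) * (d-2) : ℕ) : ℝ) with hNr
  have hMNle : Dr - Nr ≤ (((2*l+d-2) : ℕ) : ℝ) := by
    have h1 : ((d-2)*X.card + 2*l : ℕ) ≤ ((2*l+d-2) : ℕ) + ((2*l+d-2)*(d-2) : ℕ) := by
      omega
    have h2 : (((d-2)*X.card + 2*l : ℕ) : ℝ) ≤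
        (((2*l+d-2) : ℕ) : ℝ) + (((2*l+d-2)*(d-2) : ℕ) : ℝ) := by
      exact_mod_cast h1
    rw [hDr, hNr]
    linarith
  apply le_of_mul_le_mul_right _ hD0
  calc (X.card : ℝ) * (C2 : ℝ) * (1 - Nr / Dr) * Dr
      = (X.card : ℝ) * (C2 : ℝ) * (Dr - Nr) := by
        have hDne : Dr ≠ 0 := ne_of_gt hD0
        field_simp
    _ ≤ (X.card : ℝ) * (C2 : ℝ) * (((2*l+d-2) : ℕ) : ℝ) := by
        apply mul_le_mul_of_nonneg_left hMNle (by positivity)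
    _ ≤ (B.card : ℝ) * Dr := by
        have hc : ((X.card * (C2 * (2*l+d-2)) : ℕ) : ℝ) ≤
            ((B.card * ((d-2)*X.card + 2*l) : ℕ) : ℝ) := by exact_mod_cast key
        rw [Nat.cast_mul, Nat.cast_mul, Nat.cast_mul] at hc
        rw [hDr, mul_assoc]
        exact hc
    _ ≤ (yF n F 3 : ℝ) * Dr := by
        apply mul_le_mul_of_nonneg_right _ (le_of_lt hD0)
        exact_mod_cast hyFB
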